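/- For Chavarriga's system ẋ = 5x + 6x² + 4(1+a)xy + ay², ẏ = x + 2y + 4xy + (2+3a)y², the quartic f(x,y) = x² + x³ + x²y + 2axy² + 2axy³ + a²y⁴ is an invariant algebraic curve; that is, there exists a polynomial k(x,y) such that P·f_x + Q·f_y = k·f identically. -/

import Mathlib

/-- For Chavarriga's system `ẋ = 5x + 6x² + 4(1+a)xy + ay²`,
`ẏ = x + 2y + 4xy + (2+3a)y²` with `(−71 + 17√17)/32 < a < 0`, the quartic
`f(x,y) = x² + x³ + x²y + 2axy² + 2axy³ + a²y⁴` defines an invariant algebraic curve: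
there exists a polynomial `k` with `P·f_x + Q·f_y = k·f` identically. -/
theorem stmt_12 (a : ℝ)
    (ha1 : (-71 + 17 * Real.sqrt 17) / 32 < a) (ha2 : a < 0)
    (P Q f : ℝ × ℝ → ℝ)
    (hP : ∀ p : ℝ × ℝ, P p = 5 * p.1 + 6 * p.1 ^ 2 + 4 * (1 + a) * p.1 * p.2
      + a * p.2 ^ 2)
    (hQ : ∀ p : ℝ × ℝ, Q p = p.1 + 2 * p.2 + 4 * p.1 * p.2
      + (2 + 3 * a) * p.2 ^ 2)
    (hf : ∀ p : ℝ × ℝ, f p = p.1 ^ 2 + p.1 ^ 3 + p.1 ^ 2 * p.2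
      + 2 * a * p.1 * p.2 ^ 2 + 2 * a * p.1 * p.2 ^ 3 + a ^ 2 * p.2 ^ 4) :
    ∃ k : MvPolynomial (Fin 2) ℝ,
      ∀ p : ℝ × ℝ, P p * fderiv ℝ f p (1, 0) + Q p * fderiv ℝ f p (0, 1)
        = MvPolynomial.eval ![p.1, p.2] k * f p := by
  have hfe : f = fun p : ℝ × ℝ => p.1 * p.1 + p.1 * p.1 * p.1 + p.1 * p.1 * p.2
      + 2 * a * p.1 * (p.2 * p.2) + 2 * a * p.1 * (p.2 * p.2 * p.2)
      + a ^ 2 * (p.2 * p.2 * p.2 * p.2) := by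
    funext p; rw [hf]; ring
  subst hfe
  refine ⟨MvPolynomial.C 10 + MvPolynomial.C 18 * MvPolynomial.X 0
      + MvPolynomial.C (10 + 12 * a) * MvPolynomial.X 1, fun p => ?_⟩
  have hx : HasFDerivAt (fun q : ℝ × ℝ => q.1) (ContinuousLinearMap.fst ℝ ℝ ℝ) p :=
    hasFDerivAt_fst
  have hy : HasFDerivAt (fun q : ℝ × ℝ => q.2) (ContinuousLinearMap.snd ℝ ℝ ℝ) p :=
    hasFDerivAt_snd
  have hF := ((((((hx.mul hx).add ((hx.mul hx).mul hx)).add ((hx.mul hx).mul hy)).add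
      ((hx.const_mul (2 * a)).mul (hy.mul hy))).add
      ((hx.const_mul (2 * a)).mul ((hy.mul hy).mul hy))).add
      ((((hy.mul hy).mul hy).mul hy).const_mul (a ^ 2)))
  rw [(show HasFDerivAt (fun p : ℝ × ℝ => p.1 * p.1 + p.1 * p.1 * p.1 + p.1 * p.1 * p.2
      + 2 * a * p.1 * (p.2 * p.2) + 2 * a * p.1 * (p.2 * p.2 * p.2)
      + a ^ 2 * (p.2 * p.2 * p.2 * p.2)) _ p from hF).fderiv, hP, hQ]
  simp [MvPolynomial.eval_add, MvPolynomial.eval_mul]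
  ring
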